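/- Let g : [a,b] → ℝ be continuous and f : [a,b] → ℝ Hölder continuous of order r ∈ (0,1] with constant H. With G(α,β) := (1/(β−α))·∫_α^β g(t) dt for α < β, and u(t) := ∫ₐᵗ g(s) ds, the two-point trapezoid estimate gives for all x ∈ (a,b): |[∫ₐˣ g]·f(a) + [∫ₓᵇ g]·f(b) − ∫ₐᵇ f(s)g(s) ds| ≤ H·((b−a)/2 + |x − (a+b)/2|)^r · ∫ₐᵇ |g(t)| dt. -/

import Mathlib

/-- A tagged partition of the interval `[a, b]`. -/
structure TaggedPartition (a b : ℝ) where
  n : ℕ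
  pts : ℕ → ℝ
  tag : ℕ → ℝ
  mono : ∀ i, pts i ≤ pts (i + 1)
  first : pts 0 = a
  last : pts n = b
  tag_mem : ∀ i, pts i ≤ tag i ∧ tag i ≤ pts (i + 1)

/-- The Riemann–Stieltjes sum of `f` with respect to `u` over a tagged partition. -/
def RSsum (f u : ℝ → ℝ) {a b : ℝ} (P : TaggedPartition a b) : ℝ :=
  ∑ i ∈ Finset.range P.n, f (P.tag i) * (u (P.pts (i + 1)) - u (P.pts i))

/-- `IsRSIntegral f u a b I` means the Riemann–Stieltjes integral `∫ₐᵇ f du` exists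
and equals `I`: Riemann–Stieltjes sums converge to `I` as the mesh tends to `0`. -/
def IsRSIntegral (f u : ℝ → ℝ) (a b I : ℝ) : Prop :=
  ∀ ε > 0, ∃ δ > 0, ∀ P : TaggedPartition a b,
    (∀ i < P.n, P.pts (i + 1) - P.pts i < δ) → |RSsum f u P - I| < ε

/-- The total (Jordan) variation of `u` on `[a, b]`. -/
noncomputable def totalVar (u : ℝ → ℝ) (a b : ℝ) : ℝ :=
  (eVariationOn u (Set.Icc a b)).toReal

theorem two_point_trapezoid_weighted_integral
    (a b H r x : ℝ) (f g : ℝ → ℝ)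
    (hr : 0 < r) (hr1 : r ≤ 1) (hH : 0 ≤ H)
    (hf : ∀ s ∈ Set.Icc a b, ∀ t ∈ Set.Icc a b, |f s - f t| ≤ H * |s - t| ^ r)
    (hg : ContinuousOn g (Set.Icc a b))
    (hax : a < x) (hxb : x < b) :
    |(∫ s in a..x, g s) * f a + (∫ s in x..b, g s) * f b - ∫ s in a..b, f s * g s| ≤
      H * ((b - a) / 2 + |x - (a + b) / 2|) ^ r * ∫ t in a..b, |g t| := by
  have hab : a ≤ b := hax.le.trans hxb.le
  have hax' : a ≤ x := hax.le
  have hxb' : x ≤ b := hxb.le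
  set M := (b - a) / 2 + |x - (a + b) / 2| with hMdef
  have habs := le_abs_self (x - (a + b) / 2)
  have habs' := neg_abs_le (x - (a + b) / 2)
  have hxaM : x - a ≤ M := by rw [hMdef]; linarith
  have hbxM : b - x ≤ M := by rw [hMdef]; linarith
  have hM0 : 0 ≤ M := by linarith
  -- continuity of f on [a, b]
  have hfc : ContinuousOn f (Set.Icc a b) := by
    have hh : HolderOnWith ⟨H, hH⟩ ⟨r, hr.le⟩ f (Set.Icc a b) := by
      intro s hs t ht
      rw [edist_dist, edist_dist]
      change ENNReal.ofReal _ ≤ ENNReal.ofNNReal ⟨H, hH⟩ * _ ^ NNReal.toReal ⟨r, hr.le⟩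
      rw [show ENNReal.ofNNReal ⟨H, hH⟩ = ENNReal.ofReal H from (ENNReal.ofReal_eq_coe_nnreal hH).symm]
      show ENNReal.ofReal (dist (f s) (f t)) ≤ ENNReal.ofReal H * ENNReal.ofReal (dist s t) ^ r
      rw [ENNReal.ofReal_rpow_of_nonneg dist_nonneg hr.le, ← ENNReal.ofReal_mul hH]
      exact ENNReal.ofReal_le_ofReal
        (by rw [Real.dist_eq, Real.dist_eq]; exact hf s hs t ht)
    exact hh.continuousOn (by exact_mod_cast hr)
  have hfgc : ContinuousOn (fun s => f s * g s) (Set.Icc a b) := hfc.mul hg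
  have hsub1 : Set.Icc a x ⊆ Set.Icc a b := Set.Icc_subset_Icc le_rfl hxb'
  have hsub2 : Set.Icc x b ⊆ Set.Icc a b := Set.Icc_subset_Icc hax' le_rfl
  have hfg1 : IntervalIntegrable (fun s => f s * g s) MeasureTheory.volume a x :=
    (hfgc.mono hsub1).intervalIntegrable_of_Icc hax'
  have hfg2 : IntervalIntegrable (fun s => f s * g s) MeasureTheory.volume x b :=
    (hfgc.mono hsub2).intervalIntegrable_of_Icc hxb'
  have hg1 : IntervalIntegrable g MeasureTheory.volume a x :=
    (hg.mono hsub1).intervalIntegrable_of_Icc hax'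
  have hg2 : IntervalIntegrable g MeasureTheory.volume x b :=
    (hg.mono hsub2).intervalIntegrable_of_Icc hxb'
  have hsplit : ∫ s in a..b, f s * g s = (∫ s in a..x, f s * g s) + ∫ s in x..b, f s * g s :=
    (intervalIntegral.integral_add_adjacent_intervals hfg1 hfg2).symm
  have e1 : ∫ s in a..x, (f a - f s) * g s
      = f a * (∫ s in a..x, g s) - ∫ s in a..x, f s * g s := by
    simp only [sub_mul]
    rw [intervalIntegral.integral_sub ((hg1.const_mul (f a))) hfg1,
      intervalIntegral.integral_const_mul]
  have e2 : ∫ s in x..b, (f b - f s) * g s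
      = f b * (∫ s in x..b, g s) - ∫ s in x..b, f s * g s := by
    simp only [sub_mul]
    rw [intervalIntegral.integral_sub ((hg2.const_mul (f b))) hfg2,
      intervalIntegral.integral_const_mul]
  have key : (∫ s in a..x, g s) * f a + (∫ s in x..b, g s) * f b - ∫ s in a..b, f s * g s
      = (∫ s in a..x, (f a - f s) * g s) + (∫ s in x..b, (f b - f s) * g s) := by
    rw [hsplit, e1, e2]; ring
  -- integrability of the bounding functions
  have hgabs1 : IntervalIntegrable (fun s => |g s|) MeasureTheory.volume a x := hg1.abs
  have hgabs2 : IntervalIntegrable (fun s => |g s|) MeasureTheory.volume x b := hg2.abs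
  have hbd1 : |∫ s in a..x, (f a - f s) * g s| ≤ H * M ^ r * ∫ s in a..x, |g s| := by
    refine (intervalIntegral.abs_integral_le_integral_abs hax').trans ?_
    rw [← intervalIntegral.integral_const_mul]
    refine intervalIntegral.integral_mono_on hax' ?_ (hgabs1.const_mul _) ?_
    · have : ContinuousOn (fun s => |(f a - f s) * g s|) (Set.Icc a x) :=
        (((continuousOn_const.sub (hfc.mono hsub1)).mul (hg.mono hsub1))).abs
      exact this.intervalIntegrable_of_Icc hax'
    · intro s hs
      have hs' : s ∈ Set.Icc a b := hsub1 hs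
      have h1 : |f a - f s| ≤ H * |a - s| ^ r :=
        hf a (Set.left_mem_Icc.2 hab) s hs'
      have h2 : |a - s| ≤ M := by
        rw [abs_of_nonpos (by linarith [hs.1])]
        linarith [hs.2]
      calc |(f a - f s) * g s| = |f a - f s| * |g s| := abs_mul _ _
        _ ≤ (H * |a - s| ^ r) * |g s| := mul_le_mul_of_nonneg_right h1 (abs_nonneg _)
        _ ≤ H * M ^ r * |g s| := by
            have := Real.rpow_le_rpow (abs_nonneg (a - s)) h2 hr.le
            have hHr : H * |a - s| ^ r ≤ H * M ^ r := mul_le_mul_of_nonneg_left this hH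
            exact mul_le_mul_of_nonneg_right hHr (abs_nonneg _)
  have hbd2 : |∫ s in x..b, (f b - f s) * g s| ≤ H * M ^ r * ∫ s in x..b, |g s| := by
    refine (intervalIntegral.abs_integral_le_integral_abs hxb').trans ?_
    rw [← intervalIntegral.integral_const_mul]
    refine intervalIntegral.integral_mono_on hxb' ?_ (hgabs2.const_mul _) ?_
    · have : ContinuousOn (fun s => |(f b - f s) * g s|) (Set.Icc x b) :=
        (((continuousOn_const.sub (hfc.mono hsub2)).mul (hg.mono hsub2))).abs
      exact this.intervalIntegrable_of_Icc hxb'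
    · intro s hs
      have hs' : s ∈ Set.Icc a b := hsub2 hs
      have h1 : |f b - f s| ≤ H * |b - s| ^ r :=
        hf b (Set.right_mem_Icc.2 hab) s hs'
      have h2 : |b - s| ≤ M := by
        rw [abs_of_nonneg (by linarith [hs.2])]
        linarith [hs.1]
      calc |(f b - f s) * g s| = |f b - f s| * |g s| := abs_mul _ _
        _ ≤ (H * |b - s| ^ r) * |g s| := mul_le_mul_of_nonneg_right h1 (abs_nonneg _)
        _ ≤ H * M ^ r * |g s| := by
            have := Real.rpow_le_rpow (abs_nonneg (b - s)) h2 hr.le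
            have hHr : H * |b - s| ^ r ≤ H * M ^ r := mul_le_mul_of_nonneg_left this hH
            exact mul_le_mul_of_nonneg_right hHr (abs_nonneg _)
  have hgsplit : ∫ t in a..b, |g t| = (∫ s in a..x, |g s|) + ∫ s in x..b, |g s| :=
    (intervalIntegral.integral_add_adjacent_intervals hgabs1 hgabs2).symm
  rw [key, hgsplit, mul_add]
  calc |(∫ s in a..x, (f a - f s) * g s) + ∫ s in x..b, (f b - f s) * g s|
      ≤ |∫ s in a..x, (f a - f s) * g s| + |∫ s in x..b, (f b - f s) * g s| := abs_add_le _ _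
    _ ≤ H * M ^ r * (∫ s in a..x, |g s|) + H * M ^ r * ∫ s in x..b, |g s| :=
        add_le_add hbd1 hbd2
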